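/- Define the reach of a vertex v as reach(v) = max over all pairs (u,w) with v lying on the shortest path P_{uw} of min(d(u,v), d(v,w)). Let P be an α-relative locally optimal path from s to t and let v be a vertex on P. Then reach(v) ≥ min{ (α/2)·l(P), d(s,v), d(v,t) }. -/

import Mathlib

open List

variable {V : Type*}

/-- Length (cost) of a path given as a list of vertices, with edge weights `c`. -/
def pLen (c : V → V → ℝ) : List V → ℝ
  | [] => 0
  | [_] => 0
  | a :: b :: rest => c a b + pLen c (b :: rest)

/-- The pInterior of a path: the path with its two endpoints removed. -/
def pInterior (p : List V) : List V := (p.drop 1).dropLast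

/-- A (nonempty) path is a shortest path if its length equals the shortest-path
distance `d` between its endpoints. -/
def IsShortestPath [Inhabited V] (c d : V → V → ℝ) (p : List V) : Prop :=
  p ≠ [] ∧ pLen c p = d p.headI p.getLastI

/-- A path is `T`-locally optimal if every `T`-significant subpath (a nonempty
infix whose pInterior has length `< T`) is a shortest path. -/
def TLocOpt [Inhabited V] (c d : V → V → ℝ) (T : ℝ) (p : List V) : Prop :=
  ∀ q : List V, q ≠ [] → q <:+: p → pLen c (pInterior q) < T → IsShortestPath c d q

lemma pLen_nonneg (c : V → V → ℝ) (hc : ∀ a b, 0 ≤ c a b) : ∀ p : List V, 0 ≤ pLen c p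
  | [] => le_refl 0
  | [_] => le_refl 0
  | a :: b :: r => add_nonneg (hc a b) (pLen_nonneg c hc (b :: r))

lemma pLen_split (c : V → V → ℝ) (v : V) (y : List V) :
    ∀ x : List V, pLen c (x ++ v :: y) = pLen c (x ++ [v]) + pLen c (v :: y)
  | [] => by simp [pLen]
  | [a] => by simp [pLen]
  | a :: b :: x => by
    have ih := pLen_split c v y (b :: x)
    show c a b + pLen c ((b :: x) ++ v :: y) =
      (c a b + pLen c ((b :: x) ++ [v])) + pLen c (v :: y)
    rw [ih]; ring

lemma headI_append [Inhabited V] (x y : List V) (hx : x ≠ []) : (x ++ y).headI = x.headI := by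
  cases x with
  | nil => exact absurd rfl hx
  | cons a l => simp

lemma getLastI_append [Inhabited V] (x y : List V) (hy : y ≠ []) :
    (x ++ y).getLastI = y.getLastI := by
  rw [List.getLastI_eq_getLast?, List.getLastI_eq_getLast?,
    List.getLast?_append_of_ne_nil _ hy]

/-- For an `α`-relative locally optimal `s`-`t` path `P` and a
vertex `v` on `P`, `reach(v) ≥ min{(α/2)·l(P), d(s,v), d(v,t)}`, where
`reach` dominates `min(d(u,v), d(v,w))` over all shortest `u`-`w` paths
through `v`. -/
theorem stmt6 [Inhabited V] (c d : V → V → ℝ) (hc : ∀ a b, 0 ≤ c a b)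
    (hlow : ∀ p : List V, p ≠ [] → d p.headI p.getLastI ≤ pLen c p)
    (htri : ∀ a b e : V, d a e ≤ d a b + d b e)
    (α : ℝ) (hα0 : 0 < α) (hα1 : α ≤ 1)
    (s t v : V) (P : List V) (hPne : P ≠ [])
    (hs : P.headI = s) (ht : P.getLastI = t) (hv : v ∈ P)
    (hRLO : TLocOpt c d (α * pLen c P) P)
    (reach : V → ℝ)
    (hreach : ∀ (u w : V) (q : List V), IsShortestPath c d q → q.headI = u →
      q.getLastI = w → v ∈ q → min (d u v) (d v w) ≤ reach v) :
    min (α / 2 * pLen c P) (min (d s v) (d v t)) ≤ reach v := by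
  classical
  have hdvv : d v v = 0 := by
    have h1 := hlow [v] (by simp)
    have h2 := htri v v v
    simp only [pLen, List.headI, List.getLastI] at h1
    linarith
  have hr0 : (0 : ℝ) ≤ reach v := by
    have := hreach v v [v] ⟨by simp, by simp [pLen, List.getLastI, hdvv]⟩ rfl
      (by simp [List.getLastI]) (by simp)
    simpa [hdvv] using this
  obtain ⟨pre, suf, hP⟩ := List.append_of_mem hv
  set L : ℝ := pLen c P with hL
  set L1 : ℝ := pLen c (pre ++ [v]) with hL1
  set L2 : ℝ := pLen c (v :: suf) with hL2
  have hsplit : L = L1 + L2 := by rw [hL, hP]; exact pLen_split c v suf pre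
  have hdsv : d s v ≤ L1 := by
    have h := hlow (pre ++ [v]) (by simp)
    have hh : (pre ++ [v]).headI = s := by
      rw [← hs, hP]; cases pre <;> simp
    have hg : (pre ++ [v]).getLastI = v := by
      rw [getLastI_append _ _ (by simp)]; rfl
    rwa [hh, hg] at h
  have hdvt : d v t ≤ L2 := by
    have h := hlow (v :: suf) (by simp)
    have hg : (v :: suf).getLastI = t := by
      rw [← ht, hP, getLastI_append _ _ (by simp)]
    rwa [hg] at h
  set m : ℝ := min (α / 2 * L) L1 with hm
  set m' : ℝ := min (α / 2 * L) L2 with hm'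
  have hgoal_m : min (α / 2 * L) (min (d s v) (d v t)) ≤ m :=
    le_min (min_le_left _ _) ((min_le_right _ _).trans ((min_le_left _ _).trans hdsv))
  have hgoal_m' : min (α / 2 * L) (min (d s v) (d v t)) ≤ m' :=
    le_min (min_le_left _ _) ((min_le_right _ _).trans ((min_le_right _ _).trans hdvt))
  by_cases hm0 : m ≤ 0
  · linarith [hgoal_m]
  by_cases hm'0 : m' ≤ 0
  · linarith [hgoal_m']
  push_neg at hm0 hm'0
  -- choose left cut
  have hex : ∃ j, pLen c (pre.drop j ++ [v]) < m :=
    ⟨pre.length, by simp [pLen]; linarith⟩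
  set j := Nat.find hex with hjdef
  have hj0 : j ≠ 0 := by
    intro h
    have := Nat.find_spec hex
    rw [← hjdef, h] at this
    simp only [List.drop_zero] at this
    have : L1 < m := this
    have : m ≤ L1 := min_le_right _ _
    linarith
  set i := j - 1 with hidef
  have hij : i + 1 = j := Nat.succ_pred_eq_of_pos (Nat.pos_of_ne_zero hj0)
  have hfi : m ≤ pLen c (pre.drop i ++ [v]) :=
    le_of_not_gt (Nat.find_min hex (by omega))
  have hfi1 : pLen c (pre.drop (i + 1) ++ [v]) < m := by
    rw [hij]; exact Nat.find_spec hex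
  have hilt : i < pre.length := by
    by_contra h
    push_neg at h
    rw [List.drop_eq_nil_iff.mpr h] at hfi
    simp only [List.nil_append, pLen] at hfi
    linarith
  -- choose right cut
  have hex' : ∃ k, m' ≤ pLen c (v :: suf.take k) :=
    ⟨suf.length, by rw [List.take_length]; exact min_le_right _ _⟩
  set k := Nat.find hex' with hkdef
  have hk0 : k ≠ 0 := by
    intro h
    have := Nat.find_spec hex'
    rw [← hkdef, h] at this
    simp only [List.take_zero, pLen] at this
    linarith
  have hkle : k ≤ suf.length := Nat.find_min' hex'
    (by rw [List.take_length]; exact min_le_right _ _)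
  have hgk : m' ≤ pLen c (v :: suf.take k) := Nat.find_spec hex'
  have hgk1 : pLen c (v :: suf.take (k - 1)) < m' :=
    lt_of_not_ge (Nat.find_min hex' (by omega))
  set a : List V := pre.drop i with hadef
  set b : List V := suf.take k with hbdef
  have ha : a ≠ [] := by
    rw [hadef]
    intro h
    have := List.drop_eq_nil_iff.mp h
    omega
  have hblen : b.length = k := by
    rw [hbdef, List.length_take, min_eq_left hkle]
  have hb : b ≠ [] := by
    intro h; rw [h] at hblen; simp at hblen; omega
  set q : List V := a ++ v :: b with hqdef
  have hqne : q ≠ [] := by simp [hqdef]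
  have hinf : q <:+: P := by
    refine ⟨pre.take i, suf.drop k, ?_⟩
    rw [hP, hqdef, hadef, hbdef]
    simp only [List.append_assoc, List.cons_append, List.take_append_drop]
    rw [← List.append_assoc, List.take_append_drop]
  have hbdrop : b.dropLast = suf.take (k - 1) := by
    rw [List.dropLast_eq_take, hblen, List.take_take, min_eq_left (by omega)]
  have hint : pInterior q = pre.drop (i + 1) ++ v :: suf.take (k - 1) := by
    obtain ⟨a0, a', ha'⟩ := List.exists_cons_of_ne_nil ha
    have hatail : a' = pre.drop (i + 1) := by
      have : a.tail = pre.drop (i + 1) := by rw [hadef]; exact List.tail_drop ..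
      rwa [ha'] at this
    rw [hqdef, ha', pInterior]
    simp only [List.cons_append, List.drop_succ_cons, List.drop_zero]
    rw [List.dropLast_append_of_ne_nil (by simp),
      List.dropLast_cons_of_ne_nil hb, hatail, hbdrop]
  have hintlen : pLen c (pInterior q) < α * L := by
    rw [hint, pLen_split]
    have h1 : m ≤ α / 2 * L := min_le_left _ _
    have h2 : m' ≤ α / 2 * L := min_le_left _ _
    calc pLen c (pre.drop (i+1) ++ [v]) + pLen c (v :: suf.take (k-1))
        < m + m' := by linarith
      _ ≤ α / 2 * L + α / 2 * L := by linarith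
      _ = α * L := by ring
  obtain ⟨-, hqeq⟩ := hRLO q hqne hinf hintlen
  have hqsplit : pLen c q = pLen c (a ++ [v]) + pLen c (v :: b) := pLen_split c v b a
  have hqhead : q.headI = (a ++ [v]).headI := by
    rw [hqdef, headI_append _ _ ha, headI_append _ _ ha]
  have hqlast : q.getLastI = (v :: b).getLastI := getLastI_append _ _ (by simp)
  have hduv : d q.headI v ≤ pLen c (a ++ [v]) := by
    have h := hlow (a ++ [v]) (by simp)
    have hg : (a ++ [v]).getLastI = v := by
      rw [getLastI_append _ _ (by simp)]; rfl
    rw [hg, ← hqhead] at h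
    exact h
  have hdvw : d v q.getLastI ≤ pLen c (v :: b) := by
    have h := hlow (v :: b) (by simp)
    rw [← hqlast] at h
    exact h
  have htr := htri q.headI v q.getLastI
  have hduv_ge : pLen c (a ++ [v]) ≤ d q.headI v := by linarith
  have hdvw_ge : pLen c (v :: b) ≤ d v q.getLastI := by linarith
  have hre := hreach q.headI q.getLastI q ⟨hqne, hqeq⟩ rfl rfl (by simp [hqdef])
  have h1 : min (α / 2 * L) (min (d s v) (d v t)) ≤ d q.headI v := by
    calc min (α / 2 * L) (min (d s v) (d v t)) ≤ m := hgoal_m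
      _ ≤ pLen c (pre.drop i ++ [v]) := hfi
      _ ≤ d q.headI v := hduv_ge
  have h2 : min (α / 2 * L) (min (d s v) (d v t)) ≤ d v q.getLastI := by
    calc min (α / 2 * L) (min (d s v) (d v t)) ≤ m' := hgoal_m'
      _ ≤ pLen c (v :: suf.take k) := hgk
      _ ≤ d v q.getLastI := hdvw_ge
  exact le_trans (le_min h1 h2) hre
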